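/- arXiv:2106.06068 — 3 statements merged into one kernel-verified Lean document; each statement's English description precedes it below -/
import Mathlib

section
/- Let X ⊆ ℝ^m and Y ⊆ ℝ^n be arbitrary sets and A an m×n real matrix. Let x ∈ X be an affine equilibrium strategy of ⊕, i.e., x = Σᵢ αᵢ xᵢ with Σᵢ αᵢ = 1 and each xᵢ ∈ X an NE strategy of ⊕. Then x is a best response to every NE strategy y* ∈ Y of ⊖: for all x' ∈ X, ⟨x', A y*⟩ ≤ ⟨x, A y*⟩. -/
open Matrix

/-- `(x, y)` is a saddle point of the bilinear zero-sum game on `X × Y`. -/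
def IsSaddlePoint {m n : ℕ} (X : Set (Fin m → ℝ)) (Y : Set (Fin n → ℝ))
    (A : Matrix (Fin m) (Fin n) ℝ) (x : Fin m → ℝ) (y : Fin n → ℝ) : Prop :=
  x ∈ X ∧ y ∈ Y ∧
    (∀ x' ∈ X, x' ⬝ᵥ A.mulVec y ≤ x ⬝ᵥ A.mulVec y) ∧
    (∀ y' ∈ Y, x ⬝ᵥ A.mulVec y ≤ x ⬝ᵥ A.mulVec y')

/-- `x` is an NE strategy for the maximizing player. -/
def IsNEStrategyMax {m n : ℕ} (X : Set (Fin m → ℝ)) (Y : Set (Fin n → ℝ))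
    (A : Matrix (Fin m) (Fin n) ℝ) (x : Fin m → ℝ) : Prop :=
  ∃ y ∈ Y, IsSaddlePoint X Y A x y

/-- `y` is an NE strategy for the minimizing player. -/
def IsNEStrategyMin {m n : ℕ} (X : Set (Fin m → ℝ)) (Y : Set (Fin n → ℝ))
    (A : Matrix (Fin m) (Fin n) ℝ) (y : Fin n → ℝ) : Prop :=
  ∃ x ∈ X, IsSaddlePoint X Y A x y

theorem affine_equilibrium_best_response_to_NE {m n k : ℕ}
    (X : Set (Fin m → ℝ)) (Y : Set (Fin n → ℝ)) (A : Matrix (Fin m) (Fin n) ℝ)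
    (x : Fin m → ℝ) (hxX : x ∈ X)
    (xs : Fin k → (Fin m → ℝ)) (α : Fin k → ℝ)
    (hxs : ∀ i, IsNEStrategyMax X Y A (xs i))
    (hα : ∑ i, α i = 1) (hx : x = ∑ i, α i • xs i)
    (ystar : Fin n → ℝ) (hy : IsNEStrategyMin X Y A ystar) :
    ∀ x' ∈ X, x' ⬝ᵥ A.mulVec ystar ≤ x ⬝ᵥ A.mulVec ystar := by
  intro x' hx'
  obtain ⟨x₀, hx₀X, _, hyY, hmax0, hmin0⟩ := hy
  -- each xs i satisfies xs i ⬝ᵥ A.mulVec ystar = x₀ ⬝ᵥ A.mulVec ystar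
  have key : ∀ i, xs i ⬝ᵥ A.mulVec ystar = x₀ ⬝ᵥ A.mulVec ystar := by
    intro i
    obtain ⟨yi, hyiY, hxiX, _, hmaxi, hmini⟩ := hxs i
    have h1 : xs i ⬝ᵥ A.mulVec ystar ≤ x₀ ⬝ᵥ A.mulVec ystar := hmax0 _ hxiX
    have h2 : x₀ ⬝ᵥ A.mulVec ystar ≤ x₀ ⬝ᵥ A.mulVec yi := hmin0 _ hyiY
    have h3 : x₀ ⬝ᵥ A.mulVec yi ≤ xs i ⬝ᵥ A.mulVec yi := hmaxi _ hx₀X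
    have h4 : xs i ⬝ᵥ A.mulVec yi ≤ xs i ⬝ᵥ A.mulVec ystar := hmini _ hyY
    linarith
  have hxval : x ⬝ᵥ A.mulVec ystar = x₀ ⬝ᵥ A.mulVec ystar := by
    have hsum : (∑ i, α i • xs i) ⬝ᵥ A.mulVec ystar
        = ∑ i, (α i • xs i) ⬝ᵥ A.mulVec ystar := by
      simp only [dotProduct, Finset.sum_apply, Finset.sum_mul]
      exact Finset.sum_comm
    rw [hx, hsum]
    simp only [smul_dotProduct, key, smul_eq_mul]
    rw [← Finset.sum_mul, hα, one_mul]
  rw [hxval]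
  exact hmax0 _ hx'
end

section
/- Let X ⊆ ℝ^m and Y ⊆ ℝ^n be arbitrary sets, A an m×n real matrix, and let Y* ⊆ Y denote the set of NE strategies of ⊖. If x ∈ X is an affine equilibrium strategy of ⊕, then for every y* ∈ Y*, the profile (x, y*) is a saddle point of the restricted game on X × Y*: ⟨x', A y*⟩ ≤ ⟨x, A y*⟩ for all x' ∈ X, and ⟨x, A y*⟩ ≤ ⟨x, A y'⟩ for all y' ∈ Y* (in fact ⟨x, A y'⟩ = ⟨x, A y*⟩ for all y' ∈ Y*). In other words, every affine equilibrium of ⊕ is a Nash equilibrium strategy of the restricted game in which ⊖ may only play her NE strategies. -/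
open Matrix

/-- Interchangeability/equal value: for any two saddle points, cross payoffs agree. -/
lemma saddle_cross {m n : ℕ} {X : Set (Fin m → ℝ)} {Y : Set (Fin n → ℝ)}
    {A : Matrix (Fin m) (Fin n) ℝ} {x₀ x₁ : Fin m → ℝ} {y₀ y₁ : Fin n → ℝ}
    (h₀ : IsSaddlePoint X Y A x₀ y₀) (h₁ : IsSaddlePoint X Y A x₁ y₁) :
    x₁ ⬝ᵥ A.mulVec y₀ = x₀ ⬝ᵥ A.mulVec y₀ ∧
    x₁ ⬝ᵥ A.mulVec y₀ = x₁ ⬝ᵥ A.mulVec y₁ := by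
  obtain ⟨hx₀, hy₀, hmax₀, hmin₀⟩ := h₀
  obtain ⟨hx₁, hy₁, hmax₁, hmin₁⟩ := h₁
  have a := hmax₀ x₁ hx₁
  have b := hmin₀ y₁ hy₁
  have c := hmax₁ x₀ hx₀
  have d := hmin₁ y₀ hy₀
  constructor <;> linarith

theorem affine_equilibrium_is_NE_of_restricted_game {m n k : ℕ}
    (X : Set (Fin m → ℝ)) (Y : Set (Fin n → ℝ)) (A : Matrix (Fin m) (Fin n) ℝ)
    (Ystar : Set (Fin n → ℝ)) (hYstar : Ystar = {y | y ∈ Y ∧ IsNEStrategyMin X Y A y})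
    (x : Fin m → ℝ) (hxX : x ∈ X)
    (xs : Fin k → (Fin m → ℝ)) (α : Fin k → ℝ)
    (hxs : ∀ i, IsNEStrategyMax X Y A (xs i))
    (hα : ∑ i, α i = 1) (hx : x = ∑ i, α i • xs i) :
    ∀ ystar ∈ Ystar,
      (∀ x' ∈ X, x' ⬝ᵥ A.mulVec ystar ≤ x ⬝ᵥ A.mulVec ystar) ∧
      (∀ y' ∈ Ystar, x ⬝ᵥ A.mulVec ystar ≤ x ⬝ᵥ A.mulVec y') ∧
      (∀ y' ∈ Ystar, x ⬝ᵥ A.mulVec y' = x ⬝ᵥ A.mulVec ystar) := by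
  intro ystar hystar
  rw [hYstar] at hystar
  obtain ⟨hystarY, x₀, hx₀X, hs₀⟩ := hystar
  -- key: for any NE strategy y' of the min player (with saddle witness x₁),
  -- x ⬝ᵥ A y' = x₀ ⬝ᵥ A ystar
  have key : ∀ (y' : Fin n → ℝ) (x₁ : Fin m → ℝ), IsSaddlePoint X Y A x₁ y' →
      x ⬝ᵥ A.mulVec y' = x₀ ⬝ᵥ A.mulVec ystar := by
    intro y' x₁ hs₁
    have hsum : x ⬝ᵥ A.mulVec y' = ∑ i, α i * (xs i ⬝ᵥ A.mulVec y') := by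
      subst hx
      simp only [dotProduct, Finset.sum_apply, Pi.smul_apply, smul_eq_mul,
        Finset.sum_mul, Finset.mul_sum]
      rw [Finset.sum_comm]
      exact Finset.sum_congr rfl fun i _ => Finset.sum_congr rfl fun j _ => by ring
    have hval : ∀ i, xs i ⬝ᵥ A.mulVec y' = x₁ ⬝ᵥ A.mulVec y' := by
      intro i
      obtain ⟨yi, hyiY, hsi⟩ := hxs i
      exact (saddle_cross hs₁ hsi).1
    have hv : x₁ ⬝ᵥ A.mulVec y' = x₀ ⬝ᵥ A.mulVec ystar := by
      have c := saddle_cross hs₀ hs₁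
      have c' := saddle_cross hs₁ hs₀
      linarith [c.1, c.2, c'.1, c'.2]
    calc x ⬝ᵥ A.mulVec y' = ∑ i, α i * (xs i ⬝ᵥ A.mulVec y') := hsum
      _ = ∑ i, α i * (x₁ ⬝ᵥ A.mulVec y') := by
          exact Finset.sum_congr rfl fun i _ => by rw [hval i]
      _ = (∑ i, α i) * (x₁ ⬝ᵥ A.mulVec y') := by rw [Finset.sum_mul]
      _ = x₁ ⬝ᵥ A.mulVec y' := by rw [hα, one_mul]
      _ = x₀ ⬝ᵥ A.mulVec ystar := hv
  have hxval : x ⬝ᵥ A.mulVec ystar = x₀ ⬝ᵥ A.mulVec ystar := key ystar x₀ hs₀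
  refine ⟨?_, ?_, ?_⟩
  · intro x' hx'
    rw [hxval]
    exact hs₀.2.2.1 x' hx'
  · intro y' hy'
    rw [hYstar] at hy'
    obtain ⟨hy'Y, x₁, hx₁X, hs₁⟩ := hy'
    rw [hxval, key y' x₁ hs₁]
  · intro y' hy'
    rw [hYstar] at hy'
    obtain ⟨hy'Y, x₁, hx₁X, hs₁⟩ := hy'
    rw [hxval, key y' x₁ hs₁]
end

section
/- Let X ⊆ ℝ^m and Y ⊆ ℝ^n be arbitrary sets and A an m×n real matrix, and suppose the game has a saddle point (x₀, y₀) with value v = ⟨x₀, A y₀⟩. If x ∈ X is an affine equilibrium strategy of ⊕ and y ∈ Y is any strategy of ⊖ that exploits x, i.e., ⟨x, A y⟩ < v, then y is not an NE strategy of ⊖. Hence an opponent who wishes to exploit an affine equilibrium must play a non-Nash strategy, opening herself to counter-exploitation. -/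
open Matrix

/-- All saddle points have the same value. -/
lemma saddle_value_eq {m n : ℕ} {X : Set (Fin m → ℝ)} {Y : Set (Fin n → ℝ)}
    {A : Matrix (Fin m) (Fin n) ℝ} {x₁ x₂ : Fin m → ℝ} {y₁ y₂ : Fin n → ℝ}
    (h₁ : IsSaddlePoint X Y A x₁ y₁) (h₂ : IsSaddlePoint X Y A x₂ y₂) :
    x₁ ⬝ᵥ A.mulVec y₁ = x₂ ⬝ᵥ A.mulVec y₂ := by
  obtain ⟨hx₁, hy₁, hmax₁, hmin₁⟩ := h₁
  obtain ⟨hx₂, hy₂, hmax₂, hmin₂⟩ := h₂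
  have a := hmin₁ y₂ hy₂
  have b := hmax₂ x₁ hx₁
  have c := hmin₂ y₁ hy₁
  have d := hmax₁ x₂ hx₂
  linarith

theorem exploiter_of_affine_equilibrium_is_not_NE {m n k : ℕ}
    (X : Set (Fin m → ℝ)) (Y : Set (Fin n → ℝ)) (A : Matrix (Fin m) (Fin n) ℝ)
    (x₀ : Fin m → ℝ) (y₀ : Fin n → ℝ) (h₀ : IsSaddlePoint X Y A x₀ y₀)
    (v : ℝ) (hv : v = x₀ ⬝ᵥ A.mulVec y₀)
    (x : Fin m → ℝ) (hxX : x ∈ X)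
    (xs : Fin k → (Fin m → ℝ)) (α : Fin k → ℝ)
    (hxs : ∀ i, IsNEStrategyMax X Y A (xs i))
    (hα : ∑ i, α i = 1) (hx : x = ∑ i, α i • xs i)
    (y : Fin n → ℝ) (hyY : y ∈ Y) (hexp : x ⬝ᵥ A.mulVec y < v) :
    ¬ IsNEStrategyMin X Y A y := by
  rintro ⟨x', hx'X, hsp⟩
  -- value of (x', y) equals v
  have hval : x' ⬝ᵥ A.mulVec y = v := by
    rw [hv]; exact saddle_value_eq hsp h₀
  -- each xs i achieves exactly v against y
  have hkey : ∀ i, xs i ⬝ᵥ A.mulVec y = v := by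
    intro i
    obtain ⟨yi, hyi, hspi⟩ := hxs i
    have hvi : xs i ⬝ᵥ A.mulVec yi = v := by
      rw [hv]; exact saddle_value_eq hspi h₀
    have hle : xs i ⬝ᵥ A.mulVec y ≤ v := by
      rw [← hval]; exact hsp.2.2.1 (xs i) (hspi.1)
    have hge : v ≤ xs i ⬝ᵥ A.mulVec y := by
      rw [← hvi]; exact hspi.2.2.2 y hyY
    linarith
  have : x ⬝ᵥ A.mulVec y = v := by
    have expand : (∑ i, α i • xs i) ⬝ᵥ A.mulVec y = ∑ i, α i * (xs i ⬝ᵥ A.mulVec y) := by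
      simp only [dotProduct, Finset.sum_apply, Pi.smul_apply, smul_eq_mul,
        Finset.sum_mul, Finset.mul_sum, mul_assoc]
      rw [Finset.sum_comm]
    rw [hx, expand]
    simp only [hkey]
    rw [← Finset.sum_mul, hα, one_mul]
  linarith
end
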